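/- Under the DICA model, for an i.i.d. sample x_1,…,x_N with N ≥ 2, the estimator Ŝ := Ĉov(x,x) − diag(Ê(x)) is unbiased for S: E[Ŝ] = S = Σ_{k=1}^K Var(α_k) d_k d_kᵀ. -/

import Mathlib

open MeasureTheory ProbabilityTheory

/-- The law of the word-count vector `x` in the DICA model with mutually independent
topic intensities `α_k ~ ν k` and, given `α`, independent coordinates
`x_m ~ Poisson([Dα]_m)`. -/
noncomputable def dicaMeasure (M K : ℕ) (D : Matrix (Fin M) (Fin K) ℝ)
    (ν : Fin K → Measure ℝ) [∀ k, SigmaFinite (ν k)] : Measure (Fin M → ℕ) :=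
  (Measure.pi ν).bind
    (fun a => Measure.pi fun m : Fin M => poissonMeasure (∑ k, D m k * a k).toNNReal)

/-- The population matrix `S = Cov(x,x) − diag(E x)` of the DICA model. -/
noncomputable def dicaS (M K : ℕ) (D : Matrix (Fin M) (Fin K) ℝ)
    (ν : Fin K → Measure ℝ) [∀ k, SigmaFinite (ν k)] : Matrix (Fin M) (Fin M) ℝ :=
  fun i j =>
    (∫ v, ((v i : ℝ) - ∫ w, (w i : ℝ) ∂dicaMeasure M K D ν)
        * ((v j : ℝ) - ∫ w, (w j : ℝ) ∂dicaMeasure M K D ν) ∂dicaMeasure M K D ν)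
      - (if i = j then ∫ v, (v i : ℝ) ∂dicaMeasure M K D ν else 0)

/-- The sample mean `Ê(x) = (1/N) ∑ₙ xₙ` of a sample `ξ`. -/
noncomputable def sampleMean (M N : ℕ) (ξ : Fin N → Fin M → ℕ) (i : Fin M) : ℝ :=
  (1 / (N : ℝ)) * ∑ n, (ξ n i : ℝ)

/-- The estimator `Ŝ = Ĉov(x,x) − diag(Ê(x))` built from a sample `ξ`. -/
noncomputable def hatS (M N : ℕ) (ξ : Fin N → Fin M → ℕ) : Matrix (Fin M) (Fin M) ℝ :=
  fun i j =>
    (1 / ((N : ℝ) - 1)) *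
        ∑ n, ((ξ n i : ℝ) - sampleMean M N ξ i) * ((ξ n j : ℝ) - sampleMean M N ξ j)
      - (if i = j then sampleMean M N ξ i else 0)

open Real Set
open scoped ENNReal NNReal

namespace DicaAux

lemma poisson_shift (r : ℝ≥0) (n : ℕ) :
    ((n + 1 : ℕ) : ℝ) * poissonPMFReal r (n + 1) = (r : ℝ) * poissonPMFReal r n := by
  unfold poissonPMFReal
  rw [Nat.factorial_succ]
  push_cast
  have h1 : ((n : ℝ) + 1) ≠ 0 := by positivity
  have h2 : (n.factorial : ℝ) ≠ 0 := Nat.cast_ne_zero.mpr n.factorial_ne_zero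
  field_simp
  ring

lemma hasSum_poisson_mean (r : ℝ≥0) :
    HasSum (fun n : ℕ => (n : ℝ) * poissonPMFReal r n) (r : ℝ) := by
  have h := (poissonPMFRealSum r).mul_left (r : ℝ)
  rw [mul_one] at h
  have h' : HasSum (fun n : ℕ => ((n + 1 : ℕ) : ℝ) * poissonPMFReal r (n + 1))
      ((r : ℝ) - ∑ i ∈ Finset.range 1, (i : ℝ) * poissonPMFReal r i) := by
    simp only [Finset.range_one, Finset.sum_singleton, Nat.cast_zero, zero_mul, sub_zero]
    simp only [poisson_shift]; exact h
  exact (hasSum_nat_add_iff' 1).mp h'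

lemma hasSum_poisson_sq (r : ℝ≥0) :
    HasSum (fun n : ℕ => (n : ℝ) * (n : ℝ) * poissonPMFReal r n) ((r : ℝ) * r + r) := by
  have h1 := (hasSum_poisson_mean r).mul_left (r : ℝ)
  have h0 := (poissonPMFRealSum r).mul_left (r : ℝ)
  rw [mul_one] at h0
  have h := h1.add h0
  have h' : HasSum (fun n : ℕ => ((n+1 : ℕ) : ℝ) * ((n+1 : ℕ) : ℝ) * poissonPMFReal r (n+1))
      (((r:ℝ) * r + r) - ∑ i ∈ Finset.range 1, (i : ℝ) * (i : ℝ) * poissonPMFReal r i) := by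
    simp only [Finset.range_one, Finset.sum_singleton, Nat.cast_zero, zero_mul, mul_zero, sub_zero]
    have : ∀ n : ℕ, ((n+1 : ℕ) : ℝ) * ((n+1 : ℕ) : ℝ) * poissonPMFReal r (n+1)
        = (r:ℝ) * ((n:ℝ) * poissonPMFReal r n) + (r:ℝ) * poissonPMFReal r n := by
      intro n
      have := poisson_shift r n
      calc ((n+1 : ℕ) : ℝ) * ((n+1 : ℕ) : ℝ) * poissonPMFReal r (n+1)
          = ((n+1 : ℕ) : ℝ) * (((n+1 : ℕ) : ℝ) * poissonPMFReal r (n+1)) := by ring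
        _ = ((n+1 : ℕ) : ℝ) * ((r:ℝ) * poissonPMFReal r n) := by rw [this]
        _ = (r:ℝ) * ((n:ℝ) * poissonPMFReal r n) + (r:ℝ) * poissonPMFReal r n := by
            push_cast; ring
    simp only [this]; exact h
  exact (hasSum_nat_add_iff' 1).mp h'

lemma poissonMeasure_eq_pmf (r : ℝ≥0) : poissonMeasure r = (poissonPMF r).toMeasure :=
  Measure.ext_iff_singleton.mpr fun n => by
    rw [ProbabilityTheory.poissonMeasure_singleton,
      PMF.toMeasure_apply_singleton _ _ (MeasurableSet.singleton n)]
    rfl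

lemma poissonMeasure_singleton (r : ℝ≥0) (n : ℕ) :
    poissonMeasure r {n} = ENNReal.ofReal (poissonPMFReal r n) :=
  ProbabilityTheory.poissonMeasure_singleton r n

lemma poisson_integrable_and_integral (r : ℝ≥0) (f : ℕ → ℝ) (h0 : ∀ n, 0 ≤ f n) {S : ℝ}
    (hS : HasSum (fun n => f n * poissonPMFReal r n) S) :
    Integrable f (poissonMeasure r) ∧ ∫ n, f n ∂poissonMeasure r = S := by
  have hmeas : Measurable f := measurable_from_top
  have hlint : ∫⁻ n, ‖f n‖ₑ ∂poissonMeasure r = ENNReal.ofReal S := by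
    rw [lintegral_countable' (fun n => ‖f n‖ₑ)]
    have : ∀ n : ℕ, ‖f n‖ₑ * poissonMeasure r {n}
        = ENNReal.ofReal (f n * poissonPMFReal r n) := by
      intro n
      rw [poissonMeasure_singleton, Real.enorm_eq_ofReal (h0 n),
        ← ENNReal.ofReal_mul (h0 n)]
    simp_rw [this]
    rw [← ENNReal.ofReal_tsum_of_nonneg
      (fun n => mul_nonneg (h0 n) poissonPMFReal_nonneg) hS.summable, hS.tsum_eq]
  have hint : Integrable f (poissonMeasure r) := by
    refine ⟨hmeas.aestronglyMeasurable, ?_⟩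
    rw [HasFiniteIntegral, hlint]
    exact ENNReal.ofReal_lt_top
  refine ⟨hint, ?_⟩
  rw [poissonMeasure_eq_pmf, PMF.integral_eq_tsum _ f (poissonMeasure_eq_pmf r ▸ hint)]
  have : ∀ n : ℕ, (poissonPMF r n).toReal • f n = f n * poissonPMFReal r n := by
    intro n
    have hp : poissonPMF r n = ENNReal.ofReal (poissonPMFReal r n) := rfl
    rw [hp, smul_eq_mul, ENNReal.toReal_ofReal poissonPMFReal_nonneg]
    ring
  rw [tsum_congr this, hS.tsum_eq]

lemma poisson_integrable_id (r : ℝ≥0) :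
    Integrable (fun n : ℕ => (n : ℝ)) (poissonMeasure r) :=
  (poisson_integrable_and_integral r _ (fun n => Nat.cast_nonneg n) (hasSum_poisson_mean r)).1

lemma poisson_integral_id (r : ℝ≥0) : ∫ n : ℕ, (n : ℝ) ∂poissonMeasure r = r :=
  (poisson_integrable_and_integral r _ (fun n => Nat.cast_nonneg n) (hasSum_poisson_mean r)).2

lemma poisson_integrable_sq (r : ℝ≥0) :
    Integrable (fun n : ℕ => (n : ℝ) * n) (poissonMeasure r) :=
  (poisson_integrable_and_integral r _ (fun n => mul_nonneg (Nat.cast_nonneg n) (Nat.cast_nonneg n))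
    (hasSum_poisson_sq r)).1

lemma poisson_integral_sq (r : ℝ≥0) :
    ∫ n : ℕ, (n : ℝ) * n ∂poissonMeasure r = (r : ℝ) * r + r :=
  (poisson_integrable_and_integral r _ (fun n => mul_nonneg (Nat.cast_nonneg n) (Nat.cast_nonneg n))
    (hasSum_poisson_sq r)).2





variable {ι β : Type*} [Fintype ι] [DecidableEq ι] [MeasurableSpace β]

/-- Constant type family used to transport `Measure.pi` statements phrased with
`MeasureSpace` instances to ones with explicit measures. -/
def Fam (β : Type*) (_i : ι) : Type _ := β

lemma prod_two {i j : ι} (G : ι → ℝ) (hij : i ≠ j)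
    (hother : ∀ m, m ≠ i → m ≠ j → G m = 1) : ∏ m, G m = G i * G j := by
  rw [← Finset.mul_prod_erase Finset.univ G (Finset.mem_univ i),
    ← Finset.mul_prod_erase _ G (Finset.mem_erase.mpr ⟨hij.symm, Finset.mem_univ j⟩),
    Finset.prod_eq_one, mul_one]
  intro m hm
  exact hother m (Finset.mem_erase.mp (Finset.mem_erase.mp hm).2).1 (Finset.mem_erase.mp hm).1

lemma integrable_pi_prod (ν : ι → Measure β) [∀ i, SigmaFinite (ν i)] (f : ι → β → ℝ)
    (hf : ∀ i, Integrable (f i) (ν i)) :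
    Integrable (fun x : ι → β => ∏ i, f i (x i)) (Measure.pi ν) := by
  letI : ∀ i : ι, MeasureSpace (Fam β i) := fun i =>
    show MeasureSpace (Fam β i) from @MeasureSpace.mk β ‹_› (ν i)
  haveI : ∀ i : ι, SigmaFinite (volume : Measure (Fam β i)) := fun i =>
    show SigmaFinite (volume : Measure (Fam β i)) from inferInstanceAs (SigmaFinite (ν i))
  exact Integrable.fintype_prod_dep (E := Fam β) (𝕜 := ℝ) hf

lemma integral_pi_prod (ν : ι → Measure β) [∀ i, SigmaFinite (ν i)] (f : ι → β → ℝ) :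
    ∫ x : ι → β, ∏ i, f i (x i) ∂Measure.pi ν = ∏ i, ∫ t, f i t ∂ν i := by
  letI : ∀ i : ι, MeasureSpace (Fam β i) := fun i =>
    show MeasureSpace (Fam β i) from @MeasureSpace.mk β ‹_› (ν i)
  haveI : ∀ i : ι, SigmaFinite (volume : Measure (Fam β i)) := fun i =>
    show SigmaFinite (volume : Measure (Fam β i)) from inferInstanceAs (SigmaFinite (ν i))
  exact integral_fintype_prod_eq_prod (E := Fam β) (𝕜 := ℝ) f

lemma pi_single (ν : ι → Measure β) [∀ i, IsProbabilityMeasure (ν i)] (i : ι) {g : β → ℝ}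
    (hg : Integrable g (ν i)) :
    Integrable (fun x : ι → β => g (x i)) (Measure.pi ν) ∧
      ∫ x : ι → β, g (x i) ∂Measure.pi ν = ∫ t, g t ∂ν i := by
  set F : ι → β → ℝ := fun m => if m = i then g else fun _ => 1 with hF
  have hkey : ∀ x : ι → β, g (x i) = ∏ m, F m (x m) := by
    intro x
    rw [show (∏ m, F m (x m)) = ∏ m, if m = i then g (x m) else 1 from
      Finset.prod_congr rfl (fun m _ => by by_cases h : m = i <;> simp [hF, h])]
    simp [Finset.prod_ite_eq']
  have hFi : ∀ m, Integrable (F m) (ν m) := by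
    intro m
    by_cases h : m = i
    · subst h; simpa [hF] using hg
    · simpa [hF, h] using (integrable_const (1 : ℝ) (μ := ν m))
  constructor
  · exact (integrable_pi_prod ν F hFi).congr (by filter_upwards with x using (hkey x).symm)
  · calc ∫ x : ι → β, g (x i) ∂Measure.pi ν = ∫ x : ι → β, ∏ m, F m (x m) ∂Measure.pi ν := by
          simp_rw [hkey]
      _ = ∏ m, ∫ t, F m t ∂ν m := integral_pi_prod ν F
      _ = ∫ t, g t ∂ν i := by
          rw [show (∏ m, ∫ t, F m t ∂ν m) = ∏ m, if m = i then ∫ t, g t ∂ν i else 1 from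
            Finset.prod_congr rfl (fun m _ => by by_cases h : m = i <;> simp [hF, h])]
          simp [Finset.prod_ite_eq']

lemma pi_pair (ν : ι → Measure β) [∀ i, IsProbabilityMeasure (ν i)] {i j : ι} (hij : i ≠ j)
    {g h : β → ℝ} (hg : Integrable g (ν i)) (hh : Integrable h (ν j)) :
    Integrable (fun x : ι → β => g (x i) * h (x j)) (Measure.pi ν) ∧
      ∫ x : ι → β, g (x i) * h (x j) ∂Measure.pi ν = (∫ t, g t ∂ν i) * ∫ t, h t ∂ν j := by
  set F : ι → β → ℝ := fun m => if m = i then g else if m = j then h else fun _ => 1 with hF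
  have hFig : F i = g := by simp [hF]
  have hFjh : F j = h := by simp [hF, hij.symm, (Ne.symm hij)]
  have hkey : ∀ x : ι → β, g (x i) * h (x j) = ∏ m, F m (x m) := by
    intro x
    rw [prod_two (fun m => F m (x m)) hij (fun m hmi hmj => by simp [hF, hmi, hmj]), hFig, hFjh]
  have hFi : ∀ m, Integrable (F m) (ν m) := by
    intro m
    by_cases h1 : m = i
    · subst h1; simpa [hFig] using hg
    · by_cases h2 : m = j
      · subst h2; simpa [hFjh] using hh
      · simpa [hF, h1, h2] using (integrable_const (1 : ℝ) (μ := ν m))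
  constructor
  · exact (integrable_pi_prod ν F hFi).congr (by filter_upwards with x using (hkey x).symm)
  · calc ∫ x : ι → β, g (x i) * h (x j) ∂Measure.pi ν
        = ∫ x : ι → β, ∏ m, F m (x m) ∂Measure.pi ν := by simp_rw [hkey]
      _ = ∏ m, ∫ t, F m t ∂ν m := integral_pi_prod ν F
      _ = (∫ t, g t ∂ν i) * ∫ t, h t ∂ν j := by
          rw [prod_two (fun m => ∫ t, F m t ∂ν m) hij (fun m hmi hmj => by
            simp [hF, hmi, hmj]), hFig, hFjh]





variable {α β : Type*} [MeasurableSpace α] [MeasurableSpace β]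

lemma measurable_pi_measure {ι : Type*} [Fintype ι] (κ : ι → α → Measure β)
    (hκ : ∀ i, Measurable (κ i)) (hprob : ∀ i a, IsProbabilityMeasure (κ i a)) :
    Measurable (fun a => Measure.pi (fun i => κ i a)) := by
  apply Measure.measurable_of_measurable_coe
  intro s hs
  haveI : ∀ i a, SigmaFinite (κ i a) := fun i a => by
    haveI := hprob i a; infer_instance
  refine MeasurableSpace.induction_on_inter
    (C := fun s _ => Measurable fun a => Measure.pi (fun i => κ i a) s)
    generateFrom_pi.symm isPiSystem_pi ?_ ?_ ?_ ?_ _ hs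
  · simp only [measure_empty]; exact measurable_const
  · rintro t ⟨f, hf, rfl⟩
    have hmem : ∀ i, MeasurableSet (f i) := fun i => hf i (mem_univ i)
    have : (fun a => Measure.pi (fun i => κ i a) (univ.pi f)) =
        fun a => ∏ i, κ i a (f i) := by
      funext a
      exact Measure.pi_pi _ f
    rw [this]
    exact Finset.measurable_prod _ fun i _ =>
      (Measure.measurable_coe (hmem i)).comp (hκ i)
  · intro t ht iht
    have : (fun a => Measure.pi (fun i => κ i a) tᶜ) =
        fun a => 1 - Measure.pi (fun i => κ i a) t := by
      funext a
      haveI : IsProbabilityMeasure (Measure.pi (fun i => κ i a)) := by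
        haveI := fun i => hprob i a; infer_instance
      rw [measure_compl ht (measure_ne_top _ t), measure_univ]
    rw [this]
    exact Measurable.const_sub iht 1
  · intro f hdisj hmf ihf
    have : (fun a => Measure.pi (fun i => κ i a) (⋃ n, f n)) =
        fun a => ∑' n, Measure.pi (fun i => κ i a) (f n) := by
      funext a
      exact measure_iUnion hdisj hmf
    rw [this]
    exact Measurable.ennreal_tsum ihf

lemma measurable_poissonMeasure : Measurable (poissonMeasure : ℝ≥0 → Measure ℕ) := by
  apply Measure.measurable_of_measurable_coe
  intro s hs
  have : (fun r : ℝ≥0 => poissonMeasure r s) =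
      fun r => ∑' n, s.indicator (fun n => ENNReal.ofReal (poissonPMFReal r n)) n := by
    funext r
    rw [poissonMeasure_eq_pmf, PMF.toMeasure_apply _ hs]
    rfl
  rw [this]
  refine Measurable.ennreal_tsum fun n => ?_
  by_cases hn : n ∈ s
  · have hm : Measurable fun r : ℝ≥0 => poissonPMFReal r n := by
      unfold poissonPMFReal
      fun_prop
    simp only [indicator_of_mem hn]; exact ENNReal.measurable_ofReal.comp hm
  · simp [indicator_of_notMem hn]

lemma isProbabilityMeasure_bind (μ : Measure α) [IsProbabilityMeasure μ]
    (κ : α → Measure β) (hκ : Measurable κ) [∀ a, IsProbabilityMeasure (κ a)] :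
    IsProbabilityMeasure (μ.bind κ) := by
  constructor
  rw [Measure.bind_apply MeasurableSet.univ hκ.aemeasurable]
  simp

lemma integral_bind_nonneg (μ : Measure α) [IsProbabilityMeasure μ]
    (κ : α → Measure β) (hκ : Measurable κ) [∀ a, IsProbabilityMeasure (κ a)]
    (f : β → ℝ) (hf : Measurable f) (h0 : ∀ y, 0 ≤ f y)
    (hint : ∀ a, Integrable f (κ a))
    (hI : Integrable (fun a => ∫ y, f y ∂κ a) μ) :
    Integrable f (μ.bind κ) ∧ ∫ y, f y ∂(μ.bind κ) = ∫ a, ∫ y, f y ∂κ a ∂μ := by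
  have hg : Measurable fun y => ENNReal.ofReal (f y) := ENNReal.measurable_ofReal.comp hf
  have hinner : ∀ a, ∫⁻ y, ENNReal.ofReal (f y) ∂κ a = ENNReal.ofReal (∫ y, f y ∂κ a) :=
    fun a => (ofReal_integral_eq_lintegral_ofReal (hint a) (ae_of_all _ h0)).symm
  have hInn : 0 ≤ fun a => ∫ y, f y ∂κ a := fun a => integral_nonneg h0
  have hbind : ∫⁻ y, ENNReal.ofReal (f y) ∂(μ.bind κ)
      = ENNReal.ofReal (∫ a, ∫ y, f y ∂κ a ∂μ) := by
    rw [Measure.lintegral_bind hκ.aemeasurable hg.aemeasurable]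
    simp_rw [hinner]
    exact (ofReal_integral_eq_lintegral_ofReal hI (ae_of_all _ hInn)).symm
  have hintb : Integrable f (μ.bind κ) := by
    refine ⟨hf.aestronglyMeasurable, ?_⟩
    rw [HasFiniteIntegral]
    have : ∀ y, ‖f y‖ₑ = ENNReal.ofReal (f y) := fun y =>
      Real.enorm_eq_ofReal (h0 y)
    simp_rw [this, hbind]
    exact ENNReal.ofReal_lt_top
  refine ⟨hintb, ?_⟩
  rw [integral_eq_lintegral_of_nonneg_ae (ae_of_all _ h0) hf.aestronglyMeasurable, hbind,
    ENNReal.toReal_ofReal (integral_nonneg hInn)]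


lemma sum_centered {N : ℕ} (hN : (N : ℝ) ≠ 0) (a b : Fin N → ℝ) :
    ∑ n, (a n - (1 / (N : ℝ)) * ∑ m, a m) * (b n - (1 / (N : ℝ)) * ∑ m, b m)
      = (∑ n, a n * b n) - (1 / (N : ℝ)) * ((∑ n, a n) * (∑ m, b m)) := by
  set A := ∑ m, a m with hA
  set B := ∑ m, b m with hB
  have hterm : ∀ n, (a n - (1 / (N : ℝ)) * A) * (b n - (1 / (N : ℝ)) * B)
      = a n * b n - (1 / (N : ℝ)) * A * b n - (1 / (N : ℝ)) * B * a n
        + ((1 / (N : ℝ)) * A) * ((1 / (N : ℝ)) * B) := fun n => by ring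
  rw [Finset.sum_congr rfl fun n _ => hterm n]
  simp only [Finset.sum_add_distrib, Finset.sum_sub_distrib, ← Finset.mul_sum, ← hA, ← hB,
    Finset.sum_const, Finset.card_univ, Fintype.card_fin, nsmul_eq_mul]
  field_simp
  ring

section Dica

variable (M K : ℕ) (D : Matrix (Fin M) (Fin K) ℝ) (ν : Fin K → Measure ℝ)
  [∀ k, IsProbabilityMeasure (ν k)]

/-- The Poisson kernel of the DICA model. -/
noncomputable def dicaKernel (a : Fin K → ℝ) : Measure (Fin M → ℕ) :=
  Measure.pi fun m : Fin M => poissonMeasure (∑ k, D m k * a k).toNNReal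

lemma dicaMeasure_eq : dicaMeasure M K D ν = (Measure.pi ν).bind (dicaKernel M K D) := rfl

instance (a : Fin K → ℝ) : IsProbabilityMeasure (dicaKernel M K D a) := by
  unfold dicaKernel; infer_instance

lemma measurable_dicaKernel : Measurable (dicaKernel M K D) := by
  unfold dicaKernel
  exact measurable_pi_measure _
    (fun m => measurable_poissonMeasure.comp
      (measurable_real_toNNReal.comp
        (Finset.measurable_sum _ fun k _ => by fun_prop)))
    (fun m a => inferInstance)

instance dicaMeasure_isProbabilityMeasure : IsProbabilityMeasure (dicaMeasure M K D ν) := by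
  rw [dicaMeasure_eq]
  exact isProbabilityMeasure_bind _ _ (measurable_dicaKernel M K D)

/-- First and second moments of the conditional (Poisson product) law. -/
lemma dicaKernel_moment1 (a : Fin K → ℝ) (i : Fin M) :
    Integrable (fun v : Fin M → ℕ => (v i : ℝ)) (dicaKernel M K D a) ∧
      ∫ v, (v i : ℝ) ∂dicaKernel M K D a = ((∑ k, D i k * a k).toNNReal : ℝ) := by
  have h := pi_single (fun m : Fin M => poissonMeasure (∑ k, D m k * a k).toNNReal) i
    (poisson_integrable_id _)
  exact ⟨h.1, h.2.trans (poisson_integral_id _)⟩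

lemma dicaKernel_moment2 (a : Fin K → ℝ) (i j : Fin M) :
    Integrable (fun v : Fin M → ℕ => (v i : ℝ) * v j) (dicaKernel M K D a) ∧
      ∫ v, (v i : ℝ) * v j ∂dicaKernel M K D a
        = ((∑ k, D i k * a k).toNNReal : ℝ) * ((∑ k, D j k * a k).toNNReal : ℝ)
          + (if i = j then ((∑ k, D i k * a k).toNNReal : ℝ) else 0) := by
  by_cases hij : i = j
  · subst hij
    have h := pi_single (fun m : Fin M => poissonMeasure (∑ k, D m k * a k).toNNReal) i
      (poisson_integrable_sq ((∑ k, D i k * a k).toNNReal))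
    refine ⟨h.1, ?_⟩
    unfold dicaKernel
    rw [h.2]
    simp only [poisson_integral_sq]
    simp
  · have h := pi_pair (fun m : Fin M => poissonMeasure (∑ k, D m k * a k).toNNReal) hij
      (poisson_integrable_id ((∑ k, D i k * a k).toNNReal))
      (poisson_integrable_id ((∑ k, D j k * a k).toNNReal))
    refine ⟨h.1, ?_⟩
    unfold dicaKernel
    rw [h.2]
    simp only [poisson_integral_id]
    simp [hij]

lemma dica_moments (hDnonneg : ∀ m k, 0 ≤ D m k)
    (hνnonneg : ∀ k, ∀ᵐ t ∂ν k, 0 ≤ t)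
    (hν2 : ∀ k, MemLp (fun t : ℝ => t) 2 (ν k)) (i j : Fin M) :
    (Integrable (fun v : Fin M → ℕ => (v i : ℝ)) (dicaMeasure M K D ν) ∧
      ∫ v, (v i : ℝ) ∂dicaMeasure M K D ν = ∑ k, D i k * ∫ t, t ∂ν k) ∧
    (Integrable (fun v : Fin M → ℕ => (v i : ℝ) * v j) (dicaMeasure M K D ν) ∧
      ∫ v, (v i : ℝ) * v j ∂dicaMeasure M K D ν
        = (∑ k, ∑ l, D i k * D j l *
            (if k = l then ∫ t, t * t ∂ν k else (∫ t, t ∂ν k) * ∫ t, t ∂ν l))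
          + (if i = j then ∑ k, D i k * ∫ t, t ∂ν k else 0)) := by
  classical
  -- a.e. nonnegativity of the topic intensities
  have hae : ∀ᵐ a ∂Measure.pi ν, ∀ k, 0 ≤ a k := by
    rw [ae_iff]
    have hset : {a : Fin K → ℝ | ¬ ∀ k, 0 ≤ a k} = (univ.pi fun _ : Fin K => Ici (0:ℝ))ᶜ := by
      ext a
      simp only [Set.mem_setOf_eq, Set.mem_compl_iff, Set.mem_pi, Set.mem_univ, Set.mem_Ici,
        true_implies]
    have hmeas : MeasurableSet (univ.pi fun _ : Fin K => Ici (0:ℝ)) :=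
      MeasurableSet.univ_pi fun _ => measurableSet_Ici
    rw [hset, prob_compl_eq_zero_iff hmeas, Measure.pi_pi]
    have hone : ∀ k, ν k (Ici (0:ℝ)) = 1 := by
      intro k
      have h0 : ν k (Ici (0:ℝ))ᶜ = 0 := by
        have h := (ae_iff).mp (hνnonneg k)
        convert h using 2
        ext t; simp
      exact (prob_compl_eq_zero_iff measurableSet_Ici).mp h0
    simp [hone]
  set m1 : Fin K → ℝ := fun k => ∫ t, t ∂ν k with hm1
  set m2 : Fin K → ℝ := fun k => ∫ t, t * t ∂ν k with hm2
  have hIntId : ∀ k, Integrable (fun t : ℝ => t) (ν k) := fun k => (hν2 k).integrable one_le_two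
  have hIntSq : ∀ k, Integrable (fun t : ℝ => t * t) (ν k) := by
    intro k
    have h := (hν2 k).integrable_sq
    simpa [pow_two] using h
  have hIntCoord : ∀ k, Integrable (fun a : Fin K → ℝ => a k) (Measure.pi ν) :=
    fun k => (pi_single ν k (hIntId k)).1
  have hIntL : ∀ i : Fin M,
      Integrable (fun a : Fin K → ℝ => ∑ k, D i k * a k) (Measure.pi ν) :=
    fun i => integrable_finset_sum _ fun k _ => (hIntCoord k).const_mul _
  have hLval : ∀ i : Fin M,
      ∫ a, (∑ k, D i k * a k) ∂Measure.pi ν = ∑ k, D i k * m1 k := by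
    intro i
    rw [integral_finset_sum _ fun k _ => (hIntCoord k).const_mul _]
    exact Finset.sum_congr rfl fun k _ => by
      rw [integral_const_mul, (pi_single ν k (hIntId k)).2]
  have hIntPair : ∀ k l, Integrable (fun a : Fin K → ℝ => a k * a l) (Measure.pi ν) := by
    intro k l
    by_cases h : k = l
    · subst h; exact (pi_single ν k (hIntSq k)).1
    · exact (pi_pair ν h (hIntId k) (hIntId l)).1
  have hpairval : ∀ k l, ∫ a, a k * a l ∂Measure.pi ν
      = (if k = l then m2 k else m1 k * m1 l) := by
    intro k l
    by_cases h : k = l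
    · subst h; simp only [if_pos rfl]
      exact (pi_single ν k (hIntSq k)).2
    · rw [if_neg h]
      exact ((pi_pair ν h (hIntId k) (hIntId l)).2).trans rfl
  have hprod : ∀ a : Fin K → ℝ, (∑ k, D i k * a k) * (∑ l, D j l * a l)
      = ∑ k, ∑ l, (D i k * D j l) * (a k * a l) := by
    intro a
    rw [Fintype.sum_mul_sum]
    exact Finset.sum_congr rfl fun k _ => Finset.sum_congr rfl fun l _ => by ring
  have hIntLL : Integrable
      (fun a : Fin K → ℝ => (∑ k, D i k * a k) * (∑ l, D j l * a l)) (Measure.pi ν) := by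
    refine Integrable.congr ?_ (ae_of_all _ fun a => (hprod a).symm)
    exact integrable_finset_sum _ fun k _ =>
      integrable_finset_sum _ fun l _ => (hIntPair k l).const_mul _
  have hLLval : ∫ a, (∑ k, D i k * a k) * (∑ l, D j l * a l) ∂Measure.pi ν
      = ∑ k, ∑ l, D i k * D j l * (if k = l then m2 k else m1 k * m1 l) := by
    rw [integral_congr_ae (ae_of_all _ hprod),
      integral_finset_sum _ fun k _ =>
        integrable_finset_sum _ fun l _ => (hIntPair k l).const_mul _]
    refine Finset.sum_congr rfl fun k _ => ?_
    rw [integral_finset_sum _ fun l _ => (hIntPair k l).const_mul _]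
    exact Finset.sum_congr rfl fun l _ => by
      rw [integral_const_mul, hpairval k l]
  -- a.e. identities for the conditional means
  have hYae : ∀ m : Fin M,
      (fun a : Fin K → ℝ => (((∑ k, D m k * a k).toNNReal : ℝ≥0) : ℝ))
        =ᵐ[Measure.pi ν] fun a => ∑ k, D m k * a k := by
    intro m
    filter_upwards [hae] with a ha
    exact Real.coe_toNNReal _ (Finset.sum_nonneg fun k _ => mul_nonneg (hDnonneg m k) (ha k))
  have mf1 : ∀ i : Fin M, Measurable fun v : Fin M → ℕ => (v i : ℝ) :=
    fun i => measurable_from_top.comp (measurable_pi_apply i)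
  -- first moment via bind
  have hfun1 : (fun a => ∫ v, (v i : ℝ) ∂dicaKernel M K D a)
      = fun a : Fin K → ℝ => (((∑ k, D i k * a k).toNNReal : ℝ≥0) : ℝ) :=
    funext fun a => (dicaKernel_moment1 M K D a i).2
  have hI1 : Integrable (fun a => ∫ v, (v i : ℝ) ∂dicaKernel M K D a) (Measure.pi ν) := by
    rw [hfun1]
    exact (hIntL i).congr (hYae i).symm
  have h1 := integral_bind_nonneg (Measure.pi ν) (dicaKernel M K D)
    (measurable_dicaKernel M K D) (fun v => (v i : ℝ)) (mf1 i)
    (fun v => Nat.cast_nonneg _) (fun a => (dicaKernel_moment1 M K D a i).1) hI1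
  have hval1 : ∫ v, (v i : ℝ) ∂dicaMeasure M K D ν = ∑ k, D i k * m1 k := by
    rw [dicaMeasure_eq, h1.2, hfun1, integral_congr_ae (hYae i), hLval i]
  -- second moment via bind
  have hfun2 : (fun a => ∫ v, (v i : ℝ) * v j ∂dicaKernel M K D a)
      = fun a : Fin K → ℝ =>
        (((∑ k, D i k * a k).toNNReal : ℝ≥0) : ℝ) * (((∑ k, D j k * a k).toNNReal : ℝ≥0) : ℝ)
          + (if i = j then (((∑ k, D i k * a k).toNNReal : ℝ≥0) : ℝ) else 0) :=
    funext fun a => (dicaKernel_moment2 M K D a i j).2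
  have hae2 : (fun a : Fin K → ℝ =>
        (((∑ k, D i k * a k).toNNReal : ℝ≥0) : ℝ) * (((∑ k, D j k * a k).toNNReal : ℝ≥0) : ℝ)
          + (if i = j then (((∑ k, D i k * a k).toNNReal : ℝ≥0) : ℝ) else 0))
      =ᵐ[Measure.pi ν] fun a =>
        (∑ k, D i k * a k) * (∑ l, D j l * a l)
          + (if i = j then (∑ k, D i k * a k) else 0) := by
    filter_upwards [hYae i, hYae j] with a h1' h2'
    rw [h1', h2']
  have hIntRHS : Integrable (fun a : Fin K → ℝ =>
      (∑ k, D i k * a k) * (∑ l, D j l * a l)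
        + (if i = j then (∑ k, D i k * a k) else 0)) (Measure.pi ν) := by
    refine hIntLL.add ?_
    by_cases hij : i = j
    · simpa [hij] using hIntL i
    · simp [hij]
  have hI2 : Integrable (fun a => ∫ v, (v i : ℝ) * v j ∂dicaKernel M K D a) (Measure.pi ν) := by
    rw [hfun2]
    exact hIntRHS.congr hae2.symm
  have h2 := integral_bind_nonneg (Measure.pi ν) (dicaKernel M K D)
    (measurable_dicaKernel M K D) (fun v => (v i : ℝ) * v j) ((mf1 i).mul (mf1 j))
    (fun v => mul_nonneg (Nat.cast_nonneg _) (Nat.cast_nonneg _))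
    (fun a => (dicaKernel_moment2 M K D a i j).1) hI2
  have hval2 : ∫ v, (v i : ℝ) * v j ∂dicaMeasure M K D ν
      = (∑ k, ∑ l, D i k * D j l * (if k = l then m2 k else m1 k * m1 l))
        + (if i = j then ∑ k, D i k * m1 k else 0) := by
    rw [dicaMeasure_eq, h2.2, hfun2, integral_congr_ae hae2,
      integral_add hIntLL ?hif, hLLval]
    · congr 1
      by_cases hij : i = j
      · simp only [if_pos hij]
        exact hLval i
      · simp [hij]
    · by_cases hij : i = j
      · simpa [hij] using hIntL i
      · simp [hij]
  refine ⟨⟨?_, hval1⟩, ⟨?_, hval2⟩⟩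
  · rw [dicaMeasure_eq]; exact h1.1
  · rw [dicaMeasure_eq]; exact h2.1

lemma dicaS_eq (hDnonneg : ∀ m k, 0 ≤ D m k)
    (hνnonneg : ∀ k, ∀ᵐ t ∂ν k, 0 ≤ t)
    (hν2 : ∀ k, MemLp (fun t : ℝ => t) 2 (ν k)) (i j : Fin M) :
    dicaS M K D ν i j
        = (∫ v, (v i : ℝ) * v j ∂dicaMeasure M K D ν)
          - (∫ v, (v i : ℝ) ∂dicaMeasure M K D ν) * (∫ v, (v j : ℝ) ∂dicaMeasure M K D ν)
          - (if i = j then ∫ v, (v i : ℝ) ∂dicaMeasure M K D ν else 0) ∧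
      dicaS M K D ν i j = ∑ k, variance (fun t : ℝ => t) (ν k) * D i k * D j k := by
  classical
  obtain ⟨⟨hInt1i, hval1i⟩, hInt2, hval2⟩ := dica_moments M K D ν hDnonneg hνnonneg hν2 i j
  obtain ⟨⟨hInt1j, hval1j⟩, -, -⟩ := dica_moments M K D ν hDnonneg hνnonneg hν2 j i
  set μ := dicaMeasure M K D ν with hμ
  set ei := ∫ v, (v i : ℝ) ∂μ with hei
  set ej := ∫ v, (v j : ℝ) ∂μ with hej
  haveI : IsProbabilityMeasure μ := dicaMeasure_isProbabilityMeasure M K D ν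
  have hexp : dicaS M K D ν i j
      = (∫ v, (v i : ℝ) * v j ∂μ) - ei * ej - (if i = j then ei else 0) := by
    have hpoint : ∀ v : Fin M → ℕ,
        ((v i : ℝ) - ei) * ((v j : ℝ) - ej)
          = (v i : ℝ) * (v j : ℝ) - ei * (v j : ℝ) - ej * (v i : ℝ) + ei * ej := fun v => by
      ring
    have h2 : ∫ v, ((v i : ℝ) - ei) * ((v j : ℝ) - ej) ∂μ
        = (∫ v, (v i : ℝ) * v j ∂μ) - ei * ej := by
      have hg2 : Integrable (fun v : Fin M → ℕ => ei * (v j : ℝ)) μ := hInt1j.const_mul ei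
      have hg3 : Integrable (fun v : Fin M → ℕ => ej * (v i : ℝ)) μ := hInt1i.const_mul ej
      have hsub1 : Integrable (fun v : Fin M → ℕ => (v i : ℝ) * (v j : ℝ) - ei * (v j : ℝ)) μ :=
        hInt2.sub hg2
      have hsub2 : Integrable (fun v : Fin M → ℕ =>
          (v i : ℝ) * (v j : ℝ) - ei * (v j : ℝ) - ej * (v i : ℝ)) μ := hsub1.sub hg3
      rw [integral_congr_ae (ae_of_all _ hpoint), integral_add hsub2 (integrable_const _),
        integral_sub hsub1 hg3, integral_sub hInt2 hg2, integral_const_mul, integral_const_mul,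
        integral_const, probReal_univ, one_smul]
      rw [← hei, ← hej]
      ring
    show (∫ v, ((v i : ℝ) - ∫ w, (w i : ℝ) ∂μ) * ((v j : ℝ) - ∫ w, (w j : ℝ) ∂μ) ∂μ)
        - (if i = j then ∫ v, (v i : ℝ) ∂μ else 0)
      = (∫ v, (v i : ℝ) * v j ∂μ) - ei * ej - (if i = j then ei else 0)
    rw [← hei, ← hej, h2]
  refine ⟨hexp, ?_⟩
  rw [hexp, ← hei] at *
  rw [hval2, hval1i, hval1j]
  have hvar : ∀ k, variance (fun t : ℝ => t) (ν k)
      = (∫ t, t * t ∂ν k) - (∫ t, t ∂ν k) * (∫ t, t ∂ν k) := by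
    intro k
    rw [variance_eq_sub (hν2 k)]
    have hsq : ∫ t, ((fun t : ℝ => t) ^ 2) t ∂ν k = ∫ t, t * t ∂ν k := by
      refine integral_congr_ae (ae_of_all _ fun t => ?_)
      simp [pow_two]
    rw [hsq]
    ring_nf
  have hAA : (∑ k, D i k * ∫ t, t ∂ν k) * (∑ l, D j l * ∫ t, t ∂ν l)
      = ∑ k, ∑ l, (D i k * ∫ t, t ∂ν k) * (D j l * ∫ t, t ∂ν l) :=
    Fintype.sum_mul_sum _ _
  have hδ : ((∑ k, ∑ l, D i k * D j l *
        (if k = l then ∫ t, t * t ∂ν k else (∫ t, t ∂ν k) * ∫ t, t ∂ν l))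
        + (if i = j then ∑ k, D i k * ∫ t, t ∂ν k else 0))
      - (∑ k, D i k * ∫ t, t ∂ν k) * (∑ l, D j l * ∫ t, t ∂ν l)
      - (if i = j then ∑ k, D i k * ∫ t, t ∂ν k else 0)
      = (∑ k, ∑ l, D i k * D j l *
          (if k = l then ∫ t, t * t ∂ν k else (∫ t, t ∂ν k) * ∫ t, t ∂ν l))
        - (∑ k, D i k * ∫ t, t ∂ν k) * (∑ l, D j l * ∫ t, t ∂ν l) := by ring
  rw [hδ, hAA, ← Finset.sum_sub_distrib]
  refine Finset.sum_congr rfl fun k _ => ?_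
  rw [← Finset.sum_sub_distrib]
  have hterm : ∀ l, D i k * D j l *
        (if k = l then ∫ t, t * t ∂ν k else (∫ t, t ∂ν k) * ∫ t, t ∂ν l)
        - (D i k * ∫ t, t ∂ν k) * (D j l * ∫ t, t ∂ν l)
      = (if k = l then variance (fun t : ℝ => t) (ν l) * D i l * D j l else 0) := by
    intro l
    by_cases h : k = l
    · subst h
      rw [if_pos rfl, if_pos rfl, hvar k]
      ring
    · rw [if_neg h, if_neg h]
      ring
  rw [Finset.sum_congr rfl fun l _ => hterm l, Finset.sum_ite_eq]
  simp

end Dica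

end DicaAux

/-- Under the DICA model, for an i.i.d. sample of size `N ≥ 2`, the
estimator `Ŝ := Ĉov(x,x) − diag(Ê(x))` is unbiased for `S`:
`E[Ŝ] = S = ∑ₖ Var(α_k) d_k d_kᵀ`. -/
theorem dica_hatS_unbiased
    {Ω : Type*} [MeasurableSpace Ω] (P : Measure Ω) [IsProbabilityMeasure P]
    (M K N : ℕ) (hM : 1 ≤ M) (hK : 1 ≤ K) (hN : 2 ≤ N)
    (D : Matrix (Fin M) (Fin K) ℝ)
    (hDnonneg : ∀ m k, 0 ≤ D m k) (hDsum : ∀ k, ∑ m, D m k = 1)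
    (ν : Fin K → Measure ℝ) [∀ k, IsProbabilityMeasure (ν k)]
    (hνnonneg : ∀ k, ∀ᵐ t ∂(ν k), 0 ≤ t)
    (hν2 : ∀ k, MemLp (fun t : ℝ => t) 2 (ν k))
    (x : Fin N → Ω → Fin M → ℕ) (hx : ∀ n, Measurable (x n))
    (hiid : iIndepFun x P)
    (hlaw : ∀ n, P.map (x n) = dicaMeasure M K D ν) :
    ∀ i j : Fin M,
      (∫ ω, hatS M N (fun n => x n ω) i j ∂P) = dicaS M K D ν i j ∧
      dicaS M K D ν i j = ∑ k, variance (fun t : ℝ => t) (ν k) * D i k * D j k := by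
  classical
  intro i j
  obtain ⟨hS1, hS2⟩ := DicaAux.dicaS_eq M K D ν hDnonneg hνnonneg hν2 i j
  refine ⟨?_, hS2⟩
  set μ := dicaMeasure M K D ν with hμdef
  obtain ⟨⟨hI1i, -⟩, hI2, -⟩ := DicaAux.dica_moments M K D ν hDnonneg hνnonneg hν2 i j
  obtain ⟨⟨hI1j, -⟩, -, -⟩ := DicaAux.dica_moments M K D ν hDnonneg hνnonneg hν2 j i
  set ei := ∫ v, (v i : ℝ) ∂μ with hei
  set ej := ∫ v, (v j : ℝ) ∂μ with hej
  set s := ∫ v, (v i : ℝ) * v j ∂μ with hs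
  set p := ei * ej with hp
  have hN0 : (N : ℝ) ≠ 0 := Nat.cast_ne_zero.mpr (by omega)
  have hN1 : (N : ℝ) - 1 ≠ 0 := by
    have : (2 : ℝ) ≤ (N : ℝ) := by exact_mod_cast hN
    intro h
    nlinarith
  -- measurability of coordinate maps
  have mcoord : ∀ m : Fin M, Measurable fun v : Fin M → ℕ => (v m : ℝ) :=
    fun m => measurable_from_top.comp (measurable_pi_apply m)
  have hXm : ∀ (n : Fin N) (m : Fin M), Measurable fun ω => (x n ω m : ℝ) :=
    fun n m => (mcoord m).comp (hx n)
  -- transport of single-coordinate integrals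
  have hXint : ∀ (n : Fin N) (m : Fin M), Integrable (fun ω => (x n ω m : ℝ)) P := by
    intro n m
    obtain ⟨⟨hIm, -⟩, -, -⟩ := DicaAux.dica_moments M K D ν hDnonneg hνnonneg hν2 m m
    have hmf : AEStronglyMeasurable (fun v : Fin M → ℕ => (v m : ℝ)) (P.map (x n)) := by
      rw [hlaw n]; exact (mcoord m).aestronglyMeasurable
    have h2 := (integrable_map_measure hmf (hx n).aemeasurable).mp
      (by rw [hlaw n]; exact hIm)
    exact h2
  have hXvali : ∀ n : Fin N, ∫ ω, (x n ω i : ℝ) ∂P = ei := by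
    intro n
    have hmf : AEStronglyMeasurable (fun v : Fin M → ℕ => (v i : ℝ)) (P.map (x n)) := by
      rw [hlaw n]; exact (mcoord i).aestronglyMeasurable
    calc ∫ ω, (x n ω i : ℝ) ∂P = ∫ v, (v i : ℝ) ∂(P.map (x n)) :=
          (integral_map (hx n).aemeasurable hmf).symm
      _ = ei := by rw [hlaw n]
  have hXvalj : ∀ n : Fin N, ∫ ω, (x n ω j : ℝ) ∂P = ej := by
    intro n
    have hmf : AEStronglyMeasurable (fun v : Fin M → ℕ => (v j : ℝ)) (P.map (x n)) := by
      rw [hlaw n]; exact (mcoord j).aestronglyMeasurable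
    calc ∫ ω, (x n ω j : ℝ) ∂P = ∫ v, (v j : ℝ) ∂(P.map (x n)) :=
          (integral_map (hx n).aemeasurable hmf).symm
      _ = ej := by rw [hlaw n]
  -- same-index products
  have hsame : ∀ n : Fin N, Integrable (fun ω => (x n ω i : ℝ) * (x n ω j : ℝ)) P := by
    intro n
    have hmf : AEStronglyMeasurable (fun v : Fin M → ℕ => (v i : ℝ) * v j) (P.map (x n)) := by
      rw [hlaw n]; exact ((mcoord i).mul (mcoord j)).aestronglyMeasurable
    exact (integrable_map_measure hmf (hx n).aemeasurable).mp (by rw [hlaw n]; exact hI2)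
  have hsameval : ∀ n : Fin N, ∫ ω, (x n ω i : ℝ) * (x n ω j : ℝ) ∂P = s := by
    intro n
    have hmf : AEStronglyMeasurable (fun v : Fin M → ℕ => (v i : ℝ) * v j) (P.map (x n)) := by
      rw [hlaw n]; exact ((mcoord i).mul (mcoord j)).aestronglyMeasurable
    calc ∫ ω, (x n ω i : ℝ) * (x n ω j : ℝ) ∂P
        = ∫ v, (v i : ℝ) * v j ∂(P.map (x n)) := (integral_map (hx n).aemeasurable hmf).symm
      _ = s := by rw [hlaw n]
  -- cross products via independence
  have hcrossInt : ∀ n q : Fin N, n ≠ q →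
      Integrable (fun ω => (x n ω i : ℝ) * (x q ω j : ℝ)) P := by
    intro n q hnq
    have hind : IndepFun (fun ω => (x n ω i : ℝ)) (fun ω => (x q ω j : ℝ)) P :=
      (hiid.indepFun hnq).comp (mcoord i) (mcoord j)
    exact hind.integrable_mul (hXint n i) (hXint q j)
  have hcrossval : ∀ n q : Fin N, n ≠ q →
      ∫ ω, (x n ω i : ℝ) * (x q ω j : ℝ) ∂P = p := by
    intro n q hnq
    have hind : IndepFun (fun ω => (x n ω i : ℝ)) (fun ω => (x q ω j : ℝ)) P :=
      (hiid.indepFun hnq).comp (mcoord i) (mcoord j)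
    have h := hind.integral_fun_mul_eq_mul_integral (hXint n i).1 (hXint q j).1
    calc ∫ ω, (x n ω i : ℝ) * (x q ω j : ℝ) ∂P
        = (∫ ω, (x n ω i : ℝ) ∂P) * ∫ ω, (x q ω j : ℝ) ∂P := h
      _ = p := by rw [hXvali n, hXvalj q]
  -- pointwise algebraic expansion of the estimator
  have hpoint : ∀ ω, hatS M N (fun n => x n ω) i j
      = (1 / ((N : ℝ) - 1)) * ((∑ n, (x n ω i : ℝ) * (x n ω j : ℝ))
          - (1 / (N : ℝ)) * ∑ n, ∑ q, (x n ω i : ℝ) * (x q ω j : ℝ))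
        - (if i = j then (1 / (N : ℝ)) * ∑ n, (x n ω i : ℝ) else 0) := by
    intro ω
    unfold hatS sampleMean
    rw [DicaAux.sum_centered hN0 (fun n => (x n ω i : ℝ)) (fun n => (x n ω j : ℝ)),
      Fintype.sum_mul_sum]
  -- integrate the three pieces
  have intF : Integrable (fun ω => ∑ n, (x n ω i : ℝ) * (x n ω j : ℝ)) P :=
    integrable_finset_sum _ fun n _ => hsame n
  have intG : Integrable (fun ω => ∑ n, ∑ q, (x n ω i : ℝ) * (x q ω j : ℝ)) P := by
    refine integrable_finset_sum _ fun n _ => integrable_finset_sum _ fun q _ => ?_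
    by_cases h : n = q
    · subst h; exact hsame n
    · exact hcrossInt n q h
  have intH : Integrable
      (fun ω => if i = j then (1 / (N : ℝ)) * ∑ n, (x n ω i : ℝ) else 0) P := by
    by_cases hij : i = j
    · simp only [if_pos hij]
      exact (integrable_finset_sum _ fun n _ => hXint n i).const_mul _
    · simp [hij]
  have intGc : Integrable
      (fun ω => (1 / (N : ℝ)) * ∑ n, ∑ q, (x n ω i : ℝ) * (x q ω j : ℝ)) P :=
    intG.const_mul _
  have intFG : Integrable (fun ω => (∑ n, (x n ω i : ℝ) * (x n ω j : ℝ))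
      - (1 / (N : ℝ)) * ∑ n, ∑ q, (x n ω i : ℝ) * (x q ω j : ℝ)) P := intF.sub intGc
  have intBig : Integrable (fun ω => (1 / ((N : ℝ) - 1)) *
      ((∑ n, (x n ω i : ℝ) * (x n ω j : ℝ))
        - (1 / (N : ℝ)) * ∑ n, ∑ q, (x n ω i : ℝ) * (x q ω j : ℝ))) P := intFG.const_mul _
  have hFval : ∫ ω, (∑ n, (x n ω i : ℝ) * (x n ω j : ℝ)) ∂P = (N : ℝ) * s := by
    rw [integral_finset_sum _ fun n _ => hsame n,
      Finset.sum_congr rfl fun n _ => hsameval n]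
    simp [Finset.card_univ, mul_comm]
  have hGval : ∫ ω, (∑ n, ∑ q, (x n ω i : ℝ) * (x q ω j : ℝ)) ∂P
      = (N : ℝ) * ((s - p) + (N : ℝ) * p) := by
    rw [integral_finset_sum _ fun n _ => (by
      refine integrable_finset_sum _ fun q _ => ?_
      by_cases h : n = q
      · subst h; exact hsame n
      · exact hcrossInt n q h : Integrable (fun ω => ∑ q, (x n ω i : ℝ) * (x q ω j : ℝ)) P)]
    have hinner : ∀ n : Fin N, ∫ ω, (∑ q, (x n ω i : ℝ) * (x q ω j : ℝ)) ∂P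
        = (s - p) + (N : ℝ) * p := by
      intro n
      rw [integral_finset_sum _ fun q _ => (by
        by_cases h : n = q
        · subst h; exact hsame n
        · exact hcrossInt n q h : Integrable (fun ω => (x n ω i : ℝ) * (x q ω j : ℝ)) P)]
      have : ∀ q : Fin N, ∫ ω, (x n ω i : ℝ) * (x q ω j : ℝ) ∂P
          = (if n = q then s - p else 0) + p := by
        intro q
        by_cases h : n = q
        · subst h; rw [hsameval n]; simp
        · rw [hcrossval n q h]; simp [h]
      rw [Finset.sum_congr rfl fun q _ => this q, Finset.sum_add_distrib, Finset.sum_ite_eq,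
        if_pos (Finset.mem_univ n), Finset.sum_const, Finset.card_univ, Fintype.card_fin,
        nsmul_eq_mul]
    rw [Finset.sum_congr rfl fun n _ => hinner n, Finset.sum_const, Finset.card_univ,
      Fintype.card_fin, nsmul_eq_mul]
  have hHval : ∫ ω, (if i = j then (1 / (N : ℝ)) * ∑ n, (x n ω i : ℝ) else 0) ∂P
      = (if i = j then ei else 0) := by
    by_cases hij : i = j
    · simp only [if_pos hij]
      rw [integral_const_mul, integral_finset_sum _ fun n _ => hXint n i,
        Finset.sum_congr rfl fun n _ => hXvali n, Finset.sum_const, Finset.card_univ,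
        Fintype.card_fin, nsmul_eq_mul]
      field_simp
    · simp [hij]
  rw [integral_congr_ae (ae_of_all _ hpoint), integral_sub intBig intH, integral_const_mul,
    integral_sub intF intGc, integral_const_mul, hFval, hGval, hHval, hS1]
  have harith : 1 / ((N : ℝ) - 1) * ((N : ℝ) * s - 1 / (N : ℝ) * ((N : ℝ) * (s - p + (N : ℝ) * p)))
      = s - p := by
    field_simp
    ring
  rw [harith]
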